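/- Backward submartingale uniform integrability: let (X_n, E_n) be a backward submartingale with F = E_∞ and suppose Y = inf_n F(X_n) exists in E. Then the sequence (X_n) is L¹-uniformly integrable, i.e., for every φ ∈ Φ, p_φ(P_{(|X_n| ≥ λe)}|X_n|) → 0 as λ → ∞ uniformly in n. -/

import Mathlib

variable {E : Type*} [AddCommGroup E] [Lattice E]
  [CovariantClass E E (· + ·) (· ≤ ·)] [Module ℝ E]

/-- `E` is Dedekind complete. -/
def DedekindComplete (E : Type*) [AddCommGroup E] [Lattice E] : Prop :=
  ∀ A : Set E, A.Nonempty → BddAbove A → ∃ s, IsLUB A s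

/-- `e` is a weak order unit. -/
def IsWeakUnit (e : E) : Prop :=
  0 < e ∧ ∀ x : E, 0 ≤ x → IsLUB (Set.range fun n : ℕ => x ⊓ n • e) x

/-- A conditional expectation with respect to the weak order unit `e`. -/
def IsCondExp (e : E) (F : E →ₗ[ℝ] E) : Prop :=
  (∀ x, F (F x) = F x) ∧ (∀ x : E, 0 < x → 0 < F x) ∧ F e = e ∧
  ∀ V : ℕ → E, Antitone V → IsGLB (Set.range V) 0 →
    IsGLB (Set.range fun n => F (V n)) 0

/-- `(X, En)` is a backward submartingale: the conditional expectations `En` are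
decreasing (`En n (En m x) = En m (En n x) = En m x` for `n ≤ m`), each `X n`
lies in the range of `En n`, and `En (n+1) (X n) ≥ X (n+1)`. -/
def IsBackwardSubmartingale (e : E) (En : ℕ → (E →ₗ[ℝ] E)) (X : ℕ → E) : Prop :=
  (∀ n, IsCondExp e (En n)) ∧
  (∀ n m : ℕ, n ≤ m → ∀ x : E, En n (En m x) = En m x ∧ En m (En n x) = En m x) ∧
  (∀ n, En n (X n) = X n) ∧
  (∀ n, X (n + 1) ≤ En (n + 1) (X n))

/-- A band (order) projection. -/
def IsBandProj (P : E →ₗ[ℝ] E) : Prop :=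
  (∀ x, P (P x) = P x) ∧ ∀ x : E, 0 ≤ x → 0 ≤ P x ∧ P x ≤ x

/-- `P` is the band projection onto the band generated by `u ≥ 0`. -/
def IsProjOnBandGen (P : E →ₗ[ℝ] E) (u : E) : Prop :=
  IsBandProj P ∧ ∀ x : E, 0 ≤ x → IsLUB (Set.range fun n : ℕ => x ⊓ n • u) (P x)

/-- A positive, normalized, order continuous functional. -/
def IsNormedFunctional (e : E) (φ : E →ₗ[ℝ] ℝ) : Prop :=
  (∀ x : E, 0 ≤ x → 0 ≤ φ x) ∧ φ e = 1 ∧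
  ∀ V : ℕ → E, Antitone V → IsGLB (Set.range V) 0 →
    Filter.Tendsto (fun n => φ (V n)) Filter.atTop (nhds 0)

/-- `Φ` is a separating family of normalized positive order continuous functionals. -/
def IsSeparatingFamily (e : E) (Φ : Set (E →ₗ[ℝ] ℝ)) : Prop :=
  (∀ φ ∈ Φ, IsNormedFunctional e φ) ∧ ∀ x : E, (∀ φ ∈ Φ, φ x = 0) → x = 0

/-- `L¹`-uniform integrability. -/
def UnifInt (F : E →ₗ[ℝ] E) (Φ : Set (E →ₗ[ℝ] ℝ)) (X : ℕ → E)
    (P : ℕ → ℝ → (E →ₗ[ℝ] E)) : Prop :=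
  ∀ φ ∈ Φ, ∀ ε : ℝ, 0 < ε → ∃ l₀ : ℝ, ∀ l : ℝ, l₀ ≤ l → ∀ n : ℕ,
    φ (F (P n l |X n|)) < ε

namespace BSMaux

/-- A positive linear map is monotone. -/
lemma mono {T : E →ₗ[ℝ] E} (h : ∀ x : E, 0 ≤ x → 0 ≤ T x)
    {a b : E} (hab : a ≤ b) : T a ≤ T b := by
  have h2 := h (b - a) (sub_nonneg.mpr hab)
  rw [map_sub] at h2
  exact sub_nonneg.mp h2

lemma monoF {φ : E →ₗ[ℝ] ℝ} (h : ∀ x : E, 0 ≤ x → 0 ≤ φ x)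
    {a b : E} (hab : a ≤ b) : φ a ≤ φ b := by
  have h2 := h (b - a) (sub_nonneg.mpr hab)
  rw [map_sub] at h2
  linarith

lemma condexp_pos {T : E →ₗ[ℝ] E} {e : E} (h : IsCondExp e T) :
    ∀ x : E, 0 ≤ x → 0 ≤ T x := by
  intro x hx
  rcases eq_or_lt_of_le hx with h0 | h0
  · rw [← h0, map_zero]
  · exact (h.2.1 x h0).le

lemma inf_add_le {a b c : E} (ha : 0 ≤ a) (hb : 0 ≤ b) (hc : 0 ≤ c) :
    c ⊓ (a + b) ≤ c ⊓ a + c ⊓ b := by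
  have heq : c ⊓ a + c ⊓ b = ((c + c) ⊓ (a + c)) ⊓ ((c + b) ⊓ (a + b)) := by
    rw [inf_add c a (c ⊓ b), add_inf, add_inf, inf_inf_inf_comm]
  rw [heq]
  refine le_inf (le_inf ?_ ?_) (le_inf ?_ ?_)
  · exact inf_le_left.trans (le_add_of_nonneg_right hc)
  · exact inf_le_left.trans (le_add_of_nonneg_left ha)
  · exact inf_le_left.trans (le_add_of_nonneg_right hb)
  · exact inf_le_right

lemma proj_self {Pr : E →ₗ[ℝ] E} {u : E} (hPr : IsProjOnBandGen Pr u)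
    (hu : 0 ≤ u) : Pr u = u := by
  refine (hPr.2 u hu).unique ?_
  constructor
  · rintro x ⟨n, rfl⟩; exact inf_le_left
  · intro b hb
    have h1 := hb ⟨1, rfl⟩
    simpa using h1

lemma proj_disj {Pr : E →ₗ[ℝ] E} {u w : E} (hPr : IsProjOnBandGen Pr u)
    (hu : 0 ≤ u) (hw : 0 ≤ w) (hwu : w ⊓ u = 0) : Pr w = 0 := by
  have key : ∀ n : ℕ, w ⊓ n • u = 0 := by
    intro n
    induction n with
    | zero => rw [zero_smul]; exact inf_eq_right.mpr hw
    | succ n ih =>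
      have h1 : w ⊓ (n + 1) • u ≤ w ⊓ n • u + w ⊓ u := by
        rw [succ_nsmul]
        exact inf_add_le (nsmul_nonneg hu n) hu hw
      rw [ih, hwu, add_zero] at h1
      exact le_antisymm h1 (le_inf hw (nsmul_nonneg hu (n + 1)))
  refine (hPr.2 w hw).unique ?_
  constructor
  · rintro x ⟨n, rfl⟩; exact (key n).le
  · intro b hb; exact hb ⟨0, key 0⟩

/-- Chebyshev-type inequality: `l • Pr e ≤ Pr z` for `Pr` the band projection
onto the band generated by `(z - l • e)⁺`. -/
lemma cheb {Pr : E →ₗ[ℝ] E} {z e : E} {l : ℝ}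
    (hPr : IsProjOnBandGen Pr ((z - l • e) ⊔ 0)) :
    l • Pr e ≤ Pr z := by
  rw [← posPart_def] at hPr
  have h1 : Pr ((z - l • e)⁺) = (z - l • e)⁺ := proj_self hPr (posPart_nonneg _)
  have h2 : Pr ((z - l • e)⁻) = 0 :=
    proj_disj hPr (posPart_nonneg _) (negPart_nonneg _)
      (by rw [inf_comm]; exact posPart_inf_negPart_eq_zero _)
  have h3 : Pr (z - l • e) = (z - l • e)⁺ := by
    conv_lhs => rw [← posPart_sub_negPart (z - l • e)]
    rw [map_sub, h1, h2, sub_zero]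
  have h4 : Pr z - l • Pr e = (z - l • e)⁺ := by
    rw [← h3, map_sub, map_smul]
  have h5 := posPart_nonneg (z - l • e)
  rw [← h4] at h5
  exact sub_nonneg.mp h5

lemma tendsto_tail {e : E} (he : IsWeakUnit e)
    {F : E →ₗ[ℝ] E} (hF : IsCondExp e F) {φ : E →ₗ[ℝ] ℝ} (hφ : IsNormedFunctional e φ)
    (z : E) (hz : 0 ≤ z) :
    Filter.Tendsto (fun k : ℕ => φ (F ((z - k • e) ⊔ 0))) Filter.atTop (nhds 0) := by
  set V : ℕ → E := fun k => (z - k • e) ⊔ 0 with hV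
  have hanti : Antitone V := by
    intro k k' hk
    exact sup_le_sup_right (sub_le_sub_left (nsmul_le_nsmul_left he.1.le hk) z) 0
  have hglb : IsGLB (Set.range V) 0 := by
    constructor
    · rintro x ⟨k, rfl⟩; exact le_sup_right
    · intro b hb
      have hub : ∀ k : ℕ, z ⊓ k • e ≤ z - b := by
        intro k
        have h1 : b ≤ (z - k • e) ⊔ 0 := hb ⟨k, rfl⟩
        have h2 : z - z ⊓ k • e = (z - k • e) ⊔ 0 := by
          rw [sub_inf, sub_self, sup_comm]
        rw [← h2] at h1
        exact le_sub_comm.mp h1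
      have hzle : z ≤ z - b :=
        (he.2 z hz).2 (by rintro x ⟨k, rfl⟩; exact hub k)
      exact (le_sub_self_iff z).mp hzle
  have hFanti : Antitone fun k => F (V k) :=
    fun k k' h => mono (condexp_pos hF) (hanti h)
  exact hφ.2.2 _ hFanti (hF.2.2.2 V hanti hglb)

end BSMaux

/-- A backward submartingale whose sequence of conditional expectations
`(F (X n))` is bounded below (has an infimum `Y` in `E`) is `L¹`-uniformly
integrable. -/


theorem backwardSubmartingale_unifInt
    (hE : DedekindComplete E) (e : E) (he : IsWeakUnit e)
    (En : ℕ → (E →ₗ[ℝ] E)) (X : ℕ → E)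
    (hX : IsBackwardSubmartingale e En X)
    (F : E →ₗ[ℝ] E) (hF : IsCondExp e F)
    (hFEn : ∀ n, ∀ x : E, F (En n x) = F x ∧ En n (F x) = F x)
    (Φ : Set (E →ₗ[ℝ] ℝ)) (hΦ : IsSeparatingFamily e Φ)
    (Y : E) (hY : IsGLB (Set.range fun n => F (X n)) Y)
    (P : ℕ → ℝ → (E →ₗ[ℝ] E))
    (hP : ∀ n (l : ℝ), IsProjOnBandGen (P n l) ((|X n| - l • e) ⊔ 0)) :
    UnifInt F Φ X P := by
  intro φ hφmem ε hε
  obtain ⟨hC, hcompat, hfix, hsubm⟩ := hX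
  have hFpos := BSMaux.condexp_pos hF
  have hφN := hΦ.1 φ hφmem
  have hφpos := hφN.1
  have hEpos : ∀ n, ∀ x : E, 0 ≤ x → 0 ≤ En n x := fun n => BSMaux.condexp_pos (hC n)
  have hEmono : ∀ n, ∀ a b : E, a ≤ b → En n a ≤ En n b :=
    fun n a b h => BSMaux.mono (hEpos n) h
  have hEe : ∀ n, En n e = e := fun n => (hC n).2.2.1
  have hψmono : ∀ a b : E, a ≤ b → φ (F a) ≤ φ (F b) :=
    fun a b h => BSMaux.monoF hφpos (BSMaux.mono hFpos h)
  have hψpos : ∀ x : E, 0 ≤ x → 0 ≤ φ (F x) := fun x hx => hφpos _ (hFpos x hx)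
  have hψE : ∀ n, ∀ x : E, φ (F (En n x)) = φ (F x) := fun n x => congrArg φ (hFEn n x).1
  have hXpsucc : ∀ n, (X (n+1))⁺ ≤ En (n+1) ((X n)⁺) := by
    intro n
    rw [posPart_def, posPart_def]
    exact sup_le ((hsubm n).trans (hEmono _ _ _ le_sup_left)) (hEpos _ _ le_sup_right)
  have hXpos_le : ∀ n, φ (F ((X n)⁺)) ≤ φ (F ((X 0)⁺)) := by
    intro n
    induction n with
    | zero => exact le_rfl
    | succ n ih => exact le_trans (hψmono _ _ (hXpsucc n)) (le_of_eq_of_le (hψE _ _) ih)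
  have htower : ∀ m n : ℕ, m ≤ n → X n ≤ En n (X m) := by
    intro m n hmn
    induction n, hmn using Nat.le_induction with
    | base => exact (hfix m).ge
    | succ n hmn ih =>
      refine (hsubm n).trans ?_
      calc En (n+1) (X n) ≤ En (n+1) (En n (X m)) := hEmono _ _ _ ih
        _ = En (n+1) (X m) := (hcompat n (n+1) (Nat.le_succ n) (X m)).2
  have htowerp : ∀ n, (X n)⁺ ≤ En n ((X 0)⁺) := by
    intro n
    induction n with
    | zero =>
      rw [posPart_def]
      refine sup_le ?_ (hEpos 0 _ (posPart_nonneg _))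
      calc X 0 = En 0 (X 0) := (hfix 0).symm
        _ ≤ En 0 ((X 0)⁺) := hEmono _ _ _ (le_posPart _)
    | succ n ih =>
      refine (hXpsucc n).trans ?_
      calc En (n+1) ((X n)⁺) ≤ En (n+1) (En n ((X 0)⁺)) := hEmono _ _ _ ih
        _ = En (n+1) ((X 0)⁺) := (hcompat n (n+1) (Nat.le_succ n) _).2
  have hYle : ∀ n, φ Y ≤ φ (F (X n)) := fun n => BSMaux.monoF hφpos (hY.1 ⟨n, rfl⟩)
  have hsplit : ∀ (T : E →ₗ[ℝ] E) (a : E),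
      φ (F (T |a|)) = 2 * φ (F (T a⁺)) - φ (F (T a)) := by
    intro T a
    have h1 : φ (F (T |a|)) = φ (F (T a⁺)) + φ (F (T a⁻)) := by
      rw [← posPart_add_negPart a, map_add, map_add, map_add]
    have h2 : φ (F (T a⁺)) - φ (F (T a⁻)) = φ (F (T a)) := by
      rw [← map_sub, ← map_sub, ← map_sub, posPart_sub_negPart]
    linarith
  have hsplit0 : ∀ a : E, φ (F |a|) = 2 * φ (F a⁺) - φ (F a) := by
    intro a
    have h1 : φ (F |a|) = φ (F a⁺) + φ (F a⁻) := by
      rw [← posPart_add_negPart a, map_add, map_add]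
    have h2 : φ (F a⁺) - φ (F a⁻) = φ (F a) := by
      rw [← map_sub, ← map_sub, posPart_sub_negPart]
    linarith
  set M : ℝ := 2 * φ (F ((X 0)⁺)) - φ Y with hMdef
  have habsM : ∀ n, φ (F |X n|) ≤ M := by
    intro n
    rw [hsplit0 (X n)]
    have h1 := hXpos_le n
    have h2 := hYle n
    linarith
  have hM0 : 0 ≤ M := le_trans (hψpos _ (abs_nonneg (X 0))) (habsM 0)
  have hbound : ∀ (n : ℕ) (l : ℝ) (z S : E) (k : ℕ), z ≤ k • e + S → 0 ≤ S →
      φ (F ((P n l) z)) ≤ k * φ (F ((P n l) e)) + φ (F S) := by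
    intro n l z S k hz hS
    have hPrmono : ∀ a b : E, a ≤ b → (P n l) a ≤ (P n l) b :=
      fun a b hab => BSMaux.mono (fun x hx => ((hP n l).1.2 x hx).1) hab
    have h1 : (P n l) z ≤ k • (P n l) e + S := by
      have h0 := hPrmono _ _ hz
      rw [map_add, map_nsmul] at h0
      exact h0.trans (add_le_add_right ((hP n l).1.2 S hS).2 _)
    have h2 := hψmono _ _ h1
    rw [map_add, map_add, map_nsmul, map_nsmul, nsmul_eq_mul] at h2
    exact h2
  have hle1 : ∀ (z : E) (k : ℕ), z ≤ k • e + ((z - k • e) ⊔ 0) :=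
    fun z k => sub_le_iff_le_add'.mp le_sup_left
  have hle2 : ∀ (n : ℕ) (z : E) (k : ℕ), En n z ≤ k • e + En n ((z - k • e) ⊔ 0) := by
    intro n z k
    have h0 := hEmono n _ _ (hle1 z k)
    rwa [map_add, map_nsmul, hEe n] at h0
  have hex : ∀ z : E, 0 ≤ z → ∀ δ : ℝ, 0 < δ →
      ∃ k₀ : ℕ, ∀ k, k₀ ≤ k → φ (F ((z - k • e) ⊔ 0)) < δ := by
    intro z hz δ hδ
    exact Filter.eventually_atTop.mp
      ((BSMaux.tendsto_tail he hF hφN z hz).eventually (gt_mem_nhds hδ))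
  have hgmono : ∀ n, φ (F (X (n+1))) ≤ φ (F (X n)) := by
    intro n
    calc φ (F (X (n+1))) ≤ φ (F (En (n+1) (X n))) := hψmono _ _ (hsubm n)
      _ = φ (F (X n)) := hψE _ _
  set L : ℝ := ⨅ n, φ (F (X n)) with hLdef
  have hbdd : BddBelow (Set.range fun n => φ (F (X n))) :=
    ⟨φ Y, by rintro x ⟨n, rfl⟩; exact hYle n⟩
  have hLle : ∀ n, L ≤ φ (F (X n)) := fun n => ciInf_le hbdd n
  obtain ⟨m, hm⟩ : ∃ m, φ (F (X m)) < L + ε/6 := exists_lt_of_ciInf_lt (by linarith)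
  obtain ⟨k1, hk1⟩ := hex ((X 0)⁺) (posPart_nonneg _) (ε/12) (by linarith)
  obtain ⟨k2, hk2⟩ := hex |X m| (abs_nonneg _) (ε/6) (by linarith)
  have hk3 : ∀ j : ℕ, ∃ k₀ : ℕ, ∀ k, k₀ ≤ k → φ (F ((|X j| - k • e) ⊔ 0)) < ε/2 :=
    fun j => hex |X j| (abs_nonneg _) (ε/2) (by linarith)
  choose K hK using hk3
  set k : ℕ := max (max k1 k2) ((Finset.range (m+1)).sup K) with hkdef
  refine ⟨max 1 (18 * ((k:ℝ)+1) * (M+1) / ε), ?_⟩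
  intro l hl n
  have hl1 : (1:ℝ) ≤ l := le_trans (le_max_left _ _) hl
  have hl2 : 18 * ((k:ℝ)+1) * (M+1) / ε ≤ l := le_trans (le_max_right _ _) hl
  have hlpos : (0:ℝ) < l := lt_of_lt_of_le one_pos hl1
  have hc0 : (0:ℝ) ≤ φ (F ((P n l) e)) := hψpos _ (((hP n l).1.2 e he.1.le).1)
  have hcb : l * φ (F ((P n l) e)) ≤ M := by
    have hch : l • (P n l) e ≤ (P n l) |X n| := BSMaux.cheb (hP n l)
    have h2 := hψmono _ _ (hch.trans (((hP n l).1.2 |X n| (abs_nonneg _)).2))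
    rw [map_smul, map_smul, smul_eq_mul] at h2
    exact h2.trans (habsM n)
  have hkc : 18 * (k:ℝ) * φ (F ((P n l) e)) ≤ ε := by
    have h1 : 18 * ((k:ℝ)+1) * (M+1) / ε * φ (F ((P n l) e)) ≤ l * φ (F ((P n l) e)) :=
      mul_le_mul_of_nonneg_right hl2 hc0
    have h1' := h1.trans hcb
    rw [div_mul_eq_mul_div, div_le_iff₀ hε] at h1'
    have hM1 : (0:ℝ) < M + 1 := by linarith
    have h3 : (M+1) * (18 * (k:ℝ) * φ (F ((P n l) e))) ≤ (M+1) * ε := by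
      nlinarith [h1', mul_nonneg hM0 hc0, hc0, hε.le]
    exact le_of_mul_le_mul_left h3 hM1
  have hkc6 : 3 * (k:ℝ) * φ (F ((P n l) e)) ≤ ε/6 := by linarith
  have hkc2 : (k:ℝ) * φ (F ((P n l) e)) ≤ ε/2 := by nlinarith [hc0]
  rcases lt_or_ge n m with hnm | hmn
  · -- case n < m : direct bound
    have hb1 := hbound n l |X n| ((|X n| - k • e) ⊔ 0) k (hle1 _ _) le_sup_right
    have hKn : K n ≤ k :=
      le_trans (Finset.le_sup (Finset.mem_range.mpr (by omega))) (le_max_right _ _)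
    have hb2 := hK n k hKn
    calc φ (F ((P n l) |X n|))
        ≤ k * φ (F ((P n l) e)) + φ (F ((|X n| - k • e) ⊔ 0)) := hb1
      _ < ε/2 + ε/2 := by linarith
      _ = ε := by ring
  · -- case m ≤ n
    have hA : φ (F ((P n l) ((X n)⁺))) ≤ k * φ (F ((P n l) e)) + ε/12 := by
      have h1 : φ (F ((P n l) ((X n)⁺))) ≤ φ (F ((P n l) (En n ((X 0)⁺)))) :=
        hψmono _ _ (BSMaux.mono (fun x hx => ((hP n l).1.2 x hx).1) (htowerp n))
      have h2 := hbound n l (En n ((X 0)⁺)) (En n (((X 0)⁺ - k • e) ⊔ 0)) k (hle2 n _ k)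
        (hEpos n _ le_sup_right)
      rw [hψE n] at h2
      have h3 := hk1 k (le_trans (le_max_left _ _) (le_max_left _ _))
      linarith
    have hB : -(φ (F ((P n l) (X n)))) ≤ ε/6 + k * φ (F ((P n l) e)) + ε/6 := by
      have hQmono : φ (F (X n - (P n l) (X n)))
          ≤ φ (F (En n (X m) - (P n l) (En n (X m)))) := by
        refine hψmono _ _ ?_
        have hPd := ((hP n l).1.2 _ (sub_nonneg.mpr (htower m n hmn))).2
        rw [map_sub] at hPd
        rw [sub_le_sub_iff] at hPd ⊢
        rw [add_comm (X n) ((P n l) (En n (X m)))]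
        exact hPd
      have hqe : φ (F (En n (X m) - (P n l) (En n (X m))))
          = φ (F (X m)) - φ (F ((P n l) (En n (X m)))) := by
        rw [map_sub, map_sub, hψE n]
      have hneg : -(φ (F ((P n l) (En n |X m|)))) ≤ φ (F ((P n l) (En n (X m)))) := by
        have h0 : -(En n |X m|) ≤ En n (X m) := by
          have h00 := hEmono n _ _ ((neg_le.mpr (neg_le_abs (X m))))
          rwa [map_neg] at h00
        have h01 := hψmono _ _ (BSMaux.mono (fun x hx => ((hP n l).1.2 x hx).1) h0)
        rwa [map_neg, map_neg, map_neg] at h01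
      have habs2 : φ (F ((P n l) (En n |X m|))) ≤ k * φ (F ((P n l) e)) + ε/6 := by
        have h2 := hbound n l (En n |X m|) (En n ((|X m| - k • e) ⊔ 0)) k (hle2 n _ k)
          (hEpos n _ le_sup_right)
        rw [hψE n] at h2
        have h3 := hk2 k (le_trans (le_max_right _ _) (le_max_left _ _))
        linarith
      have hid : φ (F (X n - (P n l) (X n)))
          = φ (F (X n)) - φ (F ((P n l) (X n))) := by
        rw [map_sub, map_sub]
      have hgm : φ (F (X m)) - φ (F (X n)) ≤ ε/6 := by
        have h4 := hLle n
        linarith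
      linarith
    rw [hsplit (P n l) (X n)]
    linarith
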